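/- Let A ∈ ℂ^{n×n}, B ∈ ℂ^{n×m}, C ∈ ℂ^{m×n}, D ∈ ℂ^{m×m} and assume the pair (A, C) is observable, i.e., for every λ ∈ ℂ and every x ∈ ℂ^n, A x = λ x and C x = 0 imply x = 0. Then every Hermitian positive semidefinite solution X of the discrete-time scattering KYP inequality (d-sKYP) with E = I_n is positive definite. -/

import Mathlib

open Matrix
open scoped ComplexOrder

/-- For an observable pair `(A, C)`, every positive semidefinite solution of the
discrete-time scattering KYP inequality (with `E = I`) is positive definite. -/
theorem observable_dsKYP_solution_posDef
    (n m : ℕ)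
    (A : Matrix (Fin n) (Fin n) ℂ)
    (B : Matrix (Fin n) (Fin m) ℂ)
    (C : Matrix (Fin m) (Fin n) ℂ)
    (D : Matrix (Fin m) (Fin m) ℂ)
    (hobs : ∀ (lam : ℂ) (x : Fin n → ℂ), A *ᵥ x = lam • x → C *ᵥ x = 0 → x = 0)
    (X : Matrix (Fin n) (Fin n) ℂ)
    (hX : X.PosSemidef)
    (hKYP : (Matrix.fromBlocks
        (-(Aᴴ * X * A) + X - Cᴴ * C) (-(Aᴴ * X * B) - Cᴴ * D)
        (-(Dᴴ * C) - Bᴴ * X * A) (1 - Dᴴ * D - Bᴴ * X * B)).PosSemidef) :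
    X.PosDef := by
  -- key fact: if X x = 0 then C x = 0 and X (A x) = 0
  have key : ∀ x : Fin n → ℂ, X *ᵥ x = 0 → C *ᵥ x = 0 ∧ X *ᵥ (A *ᵥ x) = 0 := by
    intro x hx
    have h1 := hKYP.dotProduct_mulVec_nonneg (Sum.elim x 0)
    rw [fromBlocks_mulVec] at h1
    simp only [Sum.elim_comp_inl, Sum.elim_comp_inr, mulVec_zero, add_zero] at h1
    have hstar : star (Sum.elim x (0 : Fin m → ℂ)) = Sum.elim (star x) 0 := by
      funext i; cases i <;> simp [Pi.star_apply]
    rw [hstar, sumElim_dotProduct_sumElim, zero_dotProduct, add_zero] at h1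
    have hexp : star x ⬝ᵥ (-(Aᴴ * X * A) + X - Cᴴ * C) *ᵥ x
        = -(star (A *ᵥ x) ⬝ᵥ X *ᵥ (A *ᵥ x)) + star x ⬝ᵥ X *ᵥ x
          - star (C *ᵥ x) ⬝ᵥ (C *ᵥ x) := by
      simp only [sub_mulVec, add_mulVec, neg_mulVec, dotProduct_add, dotProduct_sub,
        dotProduct_neg, ← mulVec_mulVec]
      congr 1
      · congr 1
        rw [dotProduct_mulVec (star x) Aᴴ, ← star_mulVec]
      · rw [dotProduct_mulVec (star x) Cᴴ, ← star_mulVec]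
    rw [hexp, hx, dotProduct_zero, add_zero] at h1
    have hAq : 0 ≤ star (A *ᵥ x) ⬝ᵥ X *ᵥ (A *ᵥ x) := hX.dotProduct_mulVec_nonneg _
    have hCq : 0 ≤ star (C *ᵥ x) ⬝ᵥ (C *ᵥ x) := dotProduct_star_self_nonneg _
    have hab : (star (A *ᵥ x) ⬝ᵥ X *ᵥ (A *ᵥ x)) + (star (C *ᵥ x) ⬝ᵥ (C *ᵥ x)) ≤ 0 := by
      rw [sub_eq_add_neg, ← neg_add] at h1
      exact neg_nonneg.mp h1
    have hA0 : star (A *ᵥ x) ⬝ᵥ X *ᵥ (A *ᵥ x) = 0 :=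
      le_antisymm (le_trans (le_add_of_nonneg_right hCq) hab) hAq
    have hC0 : star (C *ᵥ x) ⬝ᵥ (C *ᵥ x) = 0 :=
      le_antisymm (le_trans (le_add_of_nonneg_left hAq) hab) hCq
    refine ⟨?_, (hX.dotProduct_mulVec_zero_iff _).mp hA0⟩
    exact dotProduct_star_self_eq_zero.mp hC0
  -- X has trivial kernel
  have hker : ∀ x : Fin n → ℂ, X *ᵥ x = 0 → x = 0 := by
    intro x hx
    by_contra hxne
    set K : Submodule ℂ (Fin n → ℂ) := LinearMap.ker X.mulVecLin with hK
    have hxK : x ∈ K := by simpa [hK, LinearMap.mem_ker, Matrix.mulVecLin_apply] using hx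
    have hKnt : Nontrivial K := by
      refine Submodule.nontrivial_iff_ne_bot.mpr ?_
      intro hbot
      exact hxne (by simpa [hbot] using hxK)
    have hinv : ∀ y ∈ K, A.mulVecLin y ∈ K := by
      intro y hy
      have := (key y (by simpa [hK, LinearMap.mem_ker, Matrix.mulVecLin_apply] using hy)).2
      simpa [hK, LinearMap.mem_ker, Matrix.mulVecLin_apply] using this
    let f : K →ₗ[ℂ] K := (A.mulVecLin).restrict hinv
    obtain ⟨c, hc⟩ := Module.End.exists_eigenvalue f
    obtain ⟨w, hw⟩ := hc.exists_hasEigenvector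
    have hfv : f w = c • w := hw.apply_eq_smul
    have hAv : A *ᵥ (w : Fin n → ℂ) = c • (w : Fin n → ℂ) := by
      have h2 : ((f w : K) : Fin n → ℂ) = A.mulVecLin (w : Fin n → ℂ) :=
        LinearMap.restrict_coe_apply _ _ _
      rw [hfv] at h2
      rw [Matrix.mulVecLin_apply] at h2
      exact h2.symm.trans (Submodule.coe_smul c w)
    have hCv : C *ᵥ (w : Fin n → ℂ) = 0 :=
      (key (w : Fin n → ℂ) (by
        have h3 := w.2
        exact h3)).1
    have hv0 : (w : Fin n → ℂ) = 0 := hobs c _ hAv hCv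
    exact hw.right (Subtype.ext hv0)
  refine PosDef.of_dotProduct_mulVec_pos hX.1 (fun x hxne => ?_)
  rcases lt_or_eq_of_le (hX.dotProduct_mulVec_nonneg x) with h | h
  · exact h
  · exact absurd (hker x ((hX.dotProduct_mulVec_zero_iff x).mp h.symm)) hxne
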